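/- Define numbers ξ_{n,i} by ξ_{0,0} = 1, ξ_{0,i} = 0 for i ≠ 0, and ξ_{n+1,i} = (1+2n−6i)·ξ_{n,i} + (n−2i+2)·ξ_{n,i−1} − 4(i+1)·ξ_{n,i+1} for n ≥ 0 (terms with negative index being 0). Then for every n ≥ 0 and every real x, B̂_n(x) = Σ_{i=0}^{⌊n/2⌋} ξ_{n,i} · (−4x)^i · (1+x)^{n−2i}. -/

import Mathlib

open Finset

/-- Signed permutations of order `n` (the hyperoctahedral group), modeled as a
permutation of `Fin n` together with a sign for each position. -/
abbrev BSigned (n : ℕ) := Equiv.Perm (Fin n) × (Fin n → Bool)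

/-- The word of a signed permutation: `bword σ j = σ(j)` for `1 ≤ j ≤ n`,
with the convention `σ(0) = 0`. -/
def bword {n : ℕ} (σ : BSigned n) (j : ℕ) : ℤ :=
  if h : 1 ≤ j ∧ j ≤ n then
    (if σ.2 ⟨j - 1, by omega⟩ then -1 else 1) * ((σ.1 ⟨j - 1, by omega⟩ : ℕ) + 1)
  else 0

/-- The number of alternating descents of a signed permutation: the number of
`0 ≤ j ≤ n-1` such that `j` is even and `σ(j) < σ(j+1)`, or `j` is odd and `σ(j) > σ(j+1)`. -/
def altdesB {n : ℕ} (σ : BSigned n) : ℕ :=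
  ((Finset.range n).filter (fun j => (Even j ∧ bword σ j < bword σ (j + 1)) ∨
      (Odd j ∧ bword σ (j + 1) < bword σ j))).card

/-- The type B alternating Eulerian number `B̂(n,k)`. -/
def Bhat (n k : ℕ) : ℕ :=
  (Finset.univ.filter (fun σ : BSigned n => altdesB σ = k)).card

/-- The type B alternating Eulerian polynomial `B̂_n(x)` as a real function. -/
noncomputable def Bpoly (n : ℕ) (x : ℝ) : ℝ :=
  ∑ σ : BSigned n, x ^ altdesB σ

/-- The word of a permutation of `{1,…,n}`: `aword π j = π(j)` for `1 ≤ j ≤ n`,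
with the convention `π(0) = 0`. -/
def aword {n : ℕ} (π : Equiv.Perm (Fin n)) (j : ℕ) : ℕ :=
  if h : 1 ≤ j ∧ j ≤ n then (π ⟨j - 1, by omega⟩ : ℕ) + 1 else 0

/-- The number of alternating descents of a permutation: the number of
`1 ≤ j ≤ n-1` such that `j` is odd and `π(j) > π(j+1)`, or `j` is even and `π(j) < π(j+1)`. -/
def altdesA {n : ℕ} (π : Equiv.Perm (Fin n)) : ℕ :=
  ((Finset.Icc 1 (n - 1)).filter (fun j => (Odd j ∧ aword π (j + 1) < aword π j) ∨
      (Even j ∧ aword π j < aword π (j + 1)))).card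

/-- The type A alternating Eulerian number `Â(n,k)`. -/
def Ahat (n k : ℕ) : ℕ :=
  (Finset.univ.filter (fun π : Equiv.Perm (Fin n) => altdesA π = k)).card

/-- The type A alternating Eulerian polynomial `Â_n(x)` as a real function. -/
noncomputable def Apoly (n : ℕ) (x : ℝ) : ℝ :=
  ∑ π : Equiv.Perm (Fin n), x ^ altdesA π

/-- The number of left peaks of a permutation: indices `1 ≤ i ≤ n-1` with
`π(i-1) < π(i) > π(i+1)`, where `π(0) = 0`. -/
def lpk {n : ℕ} (π : Equiv.Perm (Fin n)) : ℕ :=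
  ((Finset.Icc 1 (n - 1)).filter (fun i =>
      aword π (i - 1) < aword π i ∧ aword π (i + 1) < aword π i)).card

/-- `M n k` is the number of permutations of `{1,…,n}` with exactly `k` left peaks. -/
def M (n k : ℕ) : ℕ :=
  (Finset.univ.filter (fun π : Equiv.Perm (Fin n) => lpk π = k)).card

/-- The derivative polynomials for secant: `Q 0 = 1`,
`Q (n+1) = x Q n + (1+x²) (Q n)'`. -/
noncomputable def Q : ℕ → Polynomial ℝ
  | 0 => 1
  | n + 1 => Polynomial.X * Q n + (1 + Polynomial.X ^ 2) * Polynomial.derivative (Q n)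

/-- The coefficients `ξ_{n,i}` (terms with negative index vanish). -/
def xi : ℕ → ℤ → ℤ
  | 0, i => if i = 0 then 1 else 0
  | n + 1, i => (1 + 2 * (n : ℤ) - 6 * i) * xi n i + ((n : ℤ) - 2 * i + 2) * xi n (i - 1)
      - 4 * (i + 1) * xi n (i + 1)

/-- The polynomial `ξ_n(x) = Σ_{i=0}^{⌊n/2⌋} ξ_{n,i} x^i` as a real function. -/
noncomputable def xiPoly (n : ℕ) (x : ℝ) : ℝ :=
  ∑ i ∈ Finset.range (n / 2 + 1), (xi n i : ℝ) * x ^ i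

/-- A snake: a signed permutation with `σ(0) < σ(1) > σ(2) < σ(3) > ⋯`. -/
def IsSnake {n : ℕ} (σ : BSigned n) : Prop :=
  ∀ i : ℕ, (2 * i + 1 ≤ n → bword σ (2 * i) < bword σ (2 * i + 1)) ∧
    (2 * i + 2 ≤ n → bword σ (2 * i + 2) < bword σ (2 * i + 1))

/-- The Springer number `s_n`: the number of snakes of order `n`. -/
noncomputable def springer (n : ℕ) : ℕ := Nat.card {σ : BSigned n // IsSnake σ}

/-- An alternating (down-up) permutation: `π(1) > π(2) < π(3) > ⋯`. -/
def IsAlternating {m : ℕ} (π : Equiv.Perm (Fin m)) : Prop :=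
  ∀ j : ℕ, 1 ≤ j → j + 1 ≤ m →
    (Odd j → aword π (j + 1) < aword π j) ∧ (Even j → aword π j < aword π (j + 1))

/-- The secant number `E_{2n}`: the number of alternating permutations of `{1,…,2n}`. -/
noncomputable def secantNumber (n : ℕ) : ℕ :=
  Nat.card {π : Equiv.Perm (Fin (2 * n)) // IsAlternating π}

lemma xiPoly_def (n : ℕ) (x : ℝ) :
    xiPoly n x = ∑ i ∈ Finset.range (n / 2 + 1), (xi n i : ℝ) * x ^ i := rfl

noncomputable def xiD (n : ℕ) (t : ℝ) : ℝ :=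
  ∑ i ∈ Finset.range (n / 2 + 1), (xi n i : ℝ) * i * t ^ (i - 1)

lemma xiD_def (n : ℕ) (t : ℝ) :
    xiD n t = ∑ i ∈ Finset.range (n / 2 + 1), (xi n i : ℝ) * i * t ^ (i - 1) := rfl

lemma xi_neg : ∀ (n : ℕ) (i : ℤ), i < 0 → xi n i = 0 := by
  intro n
  induction n with
  | zero => intro i hi; simp [xi]; omega
  | succ n ih =>
    intro i hi
    rcases lt_or_eq_of_le (by omega : i + 1 ≤ 0) with h | h
    · simp [xi, ih i hi, ih (i-1) (by omega), ih (i+1) h]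
    · simp [xi, show i = -1 by omega, ih (-1) (by omega), ih (-2) (by omega)]

lemma xi_big : ∀ (n : ℕ) (i : ℤ), (n : ℤ) < 2 * i → xi n i = 0 := by
  intro n
  induction n with
  | zero => intro i hi; simp [xi]; omega
  | succ n ih =>
    intro i hi
    rcases lt_or_eq_of_le (by omega : (n : ℤ) + 2 ≤ 2 * i) with h | h
    · simp [xi, ih i (by omega), ih (i-1) (by omega), ih (i+1) (by omega)]
    · simp [xi, ih i (by omega), ih (i+1) (by omega), show (n:ℤ) - 2*i + 2 = 0 by omega]

lemma xi_big' (n i : ℕ) (h : n / 2 + 1 ≤ i) : xi n i = 0 :=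
  xi_big n i (by omega)

lemma xiPoly_ext (n N : ℕ) (hN : n / 2 + 1 ≤ N) (t : ℝ) :
    xiPoly n t = ∑ i ∈ Finset.range N, (xi n i : ℝ) * t ^ i := by
  rw [xiPoly]
  refine Finset.sum_subset (Finset.range_subset_range.2 hN) ?_
  intro i hi hni
  simp only [Finset.mem_range, not_lt] at hi hni
  simp [xi_big' n i hni]

lemma xiD_ext (n N : ℕ) (hN : n / 2 + 1 ≤ N) (t : ℝ) :
    xiD n t = ∑ i ∈ Finset.range N, (xi n i : ℝ) * i * t ^ (i - 1) := by
  rw [xiD]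
  refine Finset.sum_subset (Finset.range_subset_range.2 hN) ?_
  intro i hi hni
  simp only [Finset.mem_range, not_lt] at hi hni
  simp [xi_big' n i hni]

lemma sum_i_pow (N : ℕ) (c : ℕ → ℝ) (t : ℝ) :
    ∑ i ∈ Finset.range N, c i * i * t ^ i = t * ∑ i ∈ Finset.range N, c i * i * t ^ (i - 1) := by
  rw [Finset.mul_sum]
  refine Finset.sum_congr rfl ?_
  intro i _
  cases i with
  | zero => simp
  | succ m => simp [pow_succ]; ring

lemma xiRec (n : ℕ) (t : ℝ) :
    xiPoly (n+1) t = (1 + 2*n + n*t) * xiPoly n t - (4 + 6*t + 2*t^2) * xiD n t := by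
  rw [xiPoly_ext (n+1) (n+2) (by omega), xiPoly_ext n (n+2) (by omega),
    xiD_ext n (n+2) (by omega)]
  have hP : ∀ i : ℕ, ((xi (n+1) i : ℝ)) =
      ((1 + 2*(n:ℝ) - 6*i) * xi n i + ((n:ℝ) - 2*i + 2) * xi n ((i:ℤ) - 1)
        - 4*((i:ℝ)+1) * xi n ((i:ℤ)+1)) := by
    intro i; rw [show xi (n+1) i = (1 + 2 * (n : ℤ) - 6 * i) * xi n i
      + ((n : ℤ) - 2 * i + 2) * xi n ((i:ℤ) - 1) - 4 * ((i:ℤ) + 1) * xi n ((i:ℤ) + 1) from rfl]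
    push_cast; ring
  calc ∑ i ∈ Finset.range (n+2), (xi (n+1) i : ℝ) * t ^ i
      = ∑ i ∈ Finset.range (n+2), ((1 + 2*(n:ℝ) - 6*i) * xi n i * t ^ i)
        + ∑ i ∈ Finset.range (n+2), (((n:ℝ) - 2*i + 2) * xi n ((i:ℤ) - 1) * t ^ i)
        - ∑ i ∈ Finset.range (n+2), (4*((i:ℝ)+1) * xi n ((i:ℤ)+1) * t ^ i) := by
        rw [← Finset.sum_add_distrib, ← Finset.sum_sub_distrib]
        refine Finset.sum_congr rfl ?_
        intro i _; rw [hP i]; ring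
    _ = _ := by
        have hJ := sum_i_pow (n+2) (fun i => (xi n i : ℝ)) t
        have hA : ∑ i ∈ Finset.range (n+2), ((1 + 2*(n:ℝ) - 6*i) * xi n i * t ^ i)
            = (1 + 2*(n:ℝ)) * (∑ i ∈ Finset.range (n+2), (xi n i : ℝ) * t ^ i)
              - 6 * (t * ∑ i ∈ Finset.range (n+2), (xi n i : ℝ) * i * t ^ (i-1)) := by
          rw [← hJ, Finset.mul_sum, Finset.mul_sum, ← Finset.sum_sub_distrib]
          refine Finset.sum_congr rfl fun i _ => by ring
        have hB : ∑ i ∈ Finset.range (n+2), (((n:ℝ) - 2*i + 2) * xi n ((i:ℤ) - 1) * t ^ i)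
            = (n:ℝ) * t * (∑ i ∈ Finset.range (n+2), (xi n i : ℝ) * t ^ i)
              - 2 * t * (t * ∑ i ∈ Finset.range (n+2), (xi n i : ℝ) * i * t ^ (i-1)) := by
          rw [← hJ, Finset.sum_range_succ' (fun i => ((n:ℝ) - 2*i + 2) * xi n ((i:ℤ) - 1) * t ^ i) (n+1)]
          have h0 : ((n:ℝ) - 2*((0:ℕ):ℝ) + 2) * (xi n (((0:ℕ):ℤ) - 1) : ℝ) * t ^ (0:ℕ) = 0 := by
            norm_num [xi_neg n (-1) (by omega)]
          rw [h0, add_zero]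
          have : ∀ i ∈ Finset.range (n+1),
              ((n:ℝ) - 2*(i+1:ℕ) + 2) * xi n (((i+1:ℕ):ℤ) - 1) * t ^ (i+1)
              = ((n:ℝ) - 2*i) * xi n i * t ^ (i+1) := by
            intro i _
            have : (((i+1:ℕ):ℤ) - 1) = (i:ℤ) := by push_cast; ring
            rw [this]; push_cast; ring
          rw [Finset.sum_congr rfl this]
          have hext : ∑ i ∈ Finset.range (n+2), ((n:ℝ) - 2*i) * xi n i * t ^ (i+1)
              = ∑ i ∈ Finset.range (n+1), ((n:ℝ) - 2*i) * xi n i * t ^ (i+1) := by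
            rw [Finset.sum_range_succ, xi_big' n (n+1) (by omega)]; simp
          rw [← hext, Finset.mul_sum, Finset.mul_sum, ← Finset.sum_sub_distrib]
          refine Finset.sum_congr rfl fun i _ => by push_cast; ring
        have hC : ∑ i ∈ Finset.range (n+2), (4*((i:ℝ)+1) * xi n ((i:ℤ)+1) * t ^ i)
            = 4 * ∑ i ∈ Finset.range (n+2), (xi n i : ℝ) * i * t ^ (i-1) := by
          rw [Finset.sum_range_succ' (fun i => (xi n i : ℝ) * i * t ^ (i-1)) (n+1)]
          have h1 : ∑ i ∈ Finset.range (n+2), (4*((i:ℝ)+1) * xi n ((i:ℤ)+1) * t ^ i)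
              = ∑ i ∈ Finset.range (n+1), (4*((i:ℝ)+1) * xi n ((i:ℤ)+1) * t ^ i) := by
            rw [Finset.sum_range_succ, xi_big n ((n+1:ℕ)+1) (by push_cast; omega)]; simp
          rw [h1]
          simp only [Nat.cast_zero, mul_zero, zero_mul, add_zero]
          rw [Finset.mul_sum]
          refine Finset.sum_congr rfl fun i _ => ?_
          have : (((i+1:ℕ)):ℤ) = (i:ℤ)+1 := by push_cast; ring
          rw [this]
          have : (i+1) - 1 = i := by omega
          rw [this]; push_cast; ring
        rw [hA, hB, hC]; ring


noncomputable def G (n : ℕ) (x : ℝ) : ℝ :=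
  ∑ i ∈ Finset.range (n / 2 + 1), (xi n i : ℝ) * (-4 * x) ^ i * (1 + x) ^ (n - 2 * i)

noncomputable def G' (n : ℕ) (x : ℝ) : ℝ :=
  ∑ i ∈ Finset.range (n / 2 + 1), (xi n i : ℝ) *
    (((i : ℝ) * (-4 * x) ^ (i - 1) * (-4)) * (1 + x) ^ (n - 2 * i)
      + (-4 * x) ^ i * (((n - 2 * i : ℕ) : ℝ) * (1 + x) ^ (n - 2 * i - 1)))

lemma hasDerivAt_G (n : ℕ) (x : ℝ) : HasDerivAt (fun y => G n y) (G' n x) x := by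
  have : (fun y => G n y) = fun y => ∑ i ∈ Finset.range (n / 2 + 1),
      (xi n i : ℝ) * (-4 * y) ^ i * (1 + y) ^ (n - 2 * i) := by
    funext y; rw [G]
  rw [this, G']
  refine HasDerivAt.fun_sum ?_
  intro i _
  have hf : HasDerivAt (fun y : ℝ => (-4 * y) ^ i) ((i : ℝ) * (-4 * x) ^ (i - 1) * (-4)) x := by
    have h := ((hasDerivAt_id x).const_mul (-4)).pow i
    simp only [id_eq, mul_one] at h
    exact h
  have hg : HasDerivAt (fun y : ℝ => (1 + y) ^ (n - 2 * i))
      (((n - 2 * i : ℕ) : ℝ) * (1 + x) ^ (n - 2 * i - 1)) x := by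
    have := ((hasDerivAt_id x).const_add 1).fun_pow (n - 2 * i)
    simpa using this
  have := (hf.const_mul ((xi n i : ℝ))).fun_mul hg
  exact this.congr_deriv (by ring)

lemma term1 (n i : ℕ) (hi : 2 * i ≤ n) (c y : ℝ) (hz : 1 + y ≠ 0) :
    c * (-4 * y) ^ i * (1 + y) ^ (n - 2 * i)
      = (1 + y) ^ n * (c * (-4 * y / (1 + y) ^ 2) ^ i) := by
  obtain ⟨m, hm⟩ : ∃ m, n = 2 * i + m := ⟨n - 2 * i, by omega⟩
  subst hm
  rw [show 2 * i + m - 2 * i = m by omega, div_pow, pow_add, pow_mul]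
  have h2 : ((1 + y) ^ 2) ^ i ≠ 0 := pow_ne_zero _ (pow_ne_zero _ hz)
  field_simp

lemma term2 (n i : ℕ) (hi : 2 * i ≤ n) (c y : ℝ) (hz : 1 + y ≠ 0) :
    c * (((i : ℝ) * (-4 * y) ^ (i - 1) * (-4)) * (1 + y) ^ (n - 2 * i)
        + (-4 * y) ^ i * (((n - 2 * i : ℕ) : ℝ) * (1 + y) ^ (n - 2 * i - 1)))
      = (n : ℝ) * (1 + y) ^ (n - 1) * (c * (-4 * y / (1 + y) ^ 2) ^ i)
        + (1 + y) ^ n * (-4 * (1 - y) / (1 + y) ^ 3) * (c * (i : ℝ) * (-4 * y / (1 + y) ^ 2) ^ (i - 1)) := by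
  cases i with
  | zero => simp; ring
  | succ j =>
    rcases Nat.eq_zero_or_pos (n - 2 * (j + 1)) with h0 | hpos
    · have hn : n = 2 * j + 2 := by omega
      subst hn
      simp only [show 2 * j + 2 - 2 * (j + 1) = 0 by omega,
        show 2 * j + 2 - 2 * (j + 1) - 1 = 0 by omega,
        show 2 * j + 2 - 1 = 2 * j + 1 by omega,
        show j + 1 - 1 = j by omega]
      push_cast
      simp only [div_pow, ← pow_mul]
      field_simp
      ring
    · obtain ⟨k, hk⟩ : ∃ k, n = 2 * j + 3 + k := ⟨n - 2*j - 3, by omega⟩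
      subst hk
      simp only [show 2 * j + 3 + k - 2 * (j + 1) = k + 1 by omega,
        show 2 * j + 3 + k - 2 * (j + 1) - 1 = k by omega,
        show 2 * j + 3 + k - 1 = 2 * j + 2 + k by omega,
        show j + 1 - 1 = j by omega]
      push_cast
      simp only [div_pow, ← pow_mul]
      field_simp
      ring

lemma Gsub (n : ℕ) (y : ℝ) (hz : 1 + y ≠ 0) :
    G n y = (1 + y) ^ n * xiPoly n (-4 * y / (1 + y) ^ 2) := by
  rw [G, xiPoly_def, Finset.mul_sum]
  refine Finset.sum_congr rfl fun i hi => ?_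
  have h2i : 2 * i ≤ n := by
    have := Finset.mem_range.mp hi; omega
  exact term1 n i h2i _ y hz

lemma G'sub (n : ℕ) (y : ℝ) (hz : 1 + y ≠ 0) :
    G' n y = (n : ℝ) * (1 + y) ^ (n - 1) * xiPoly n (-4 * y / (1 + y) ^ 2)
      + (1 + y) ^ n * (-4 * (1 - y) / (1 + y) ^ 3) * xiD n (-4 * y / (1 + y) ^ 2) := by
  rw [G', xiPoly_def, xiD_def, Finset.mul_sum, Finset.mul_sum, ← Finset.sum_add_distrib]
  refine Finset.sum_congr rfl fun i hi => ?_
  have h2i : 2 * i ≤ n := by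
    have := Finset.mem_range.mp hi; omega
  have := term2 n i h2i (xi n i : ℝ) y hz
  rw [this]

lemma contG (n : ℕ) : Continuous (G n) := by
  refine continuous_finset_sum _ fun i _ => ?_
  fun_prop

lemma contG' (n : ℕ) : Continuous (G' n) := by
  refine continuous_finset_sum _ fun i _ => ?_
  fun_prop

lemma alg (n : ℕ) (x : ℝ) :
    (1 + (n:ℝ) + x + (n:ℝ) * x^2) * G n x + (1 - x) * (1 + x^2) * G' n x = G (n+1) x := by
  have key : ∀ y : ℝ, y ≠ -1 →
      (1 + (n:ℝ) + y + (n:ℝ) * y^2) * G n y + (1 - y) * (1 + y^2) * G' n y = G (n+1) y := by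
    intro y hy
    have hz : 1 + y ≠ 0 := fun h => hy (by linarith)
    rw [Gsub n y hz, G'sub n y hz, Gsub (n+1) y hz, xiRec n]
    cases n with
    | zero => push_cast; field_simp; ring
    | succ m =>
      simp only [show m + 1 - 1 = m by omega]
      push_cast
      field_simp
      ring
  have h1 : Continuous (fun y => (1 + (n:ℝ) + y + (n:ℝ) * y^2) * G n y + (1 - y) * (1 + y^2) * G' n y) := by
    have := contG n; have := contG' n; fun_prop
  have h2 : Continuous (G (n+1)) := contG (n+1)
  have := Continuous.ext_on (dense_compl_singleton (-1 : ℝ)) h1 h2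
    (fun y hy => key y (Set.mem_compl_singleton_iff.mp hy))
  exact congrFun this x

/-! insertion -/

def insF {n : ℕ} (π : Equiv.Perm (Fin n)) (p : Fin (n+1)) (i : Fin (n+1)) : Fin (n+1) :=
  if h : (i : ℕ) < (p : ℕ) then (π ⟨i, by have := p.isLt; omega⟩).castSucc
  else if h2 : (i : ℕ) = (p : ℕ) then Fin.last n
  else (π ⟨(i : ℕ) - 1, by have := i.isLt; omega⟩).castSucc

lemma insF_inj {n : ℕ} (π : Equiv.Perm (Fin n)) (p : Fin (n+1)) :
    Function.Injective (insF π p) := by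
  intro a b h
  have ha := a.isLt; have hb := b.isLt; have hp := p.isLt
  unfold insF at h
  split_ifs at h with h1 h2 h3 h4 h5 h6 h7 h8 <;>
    first
      | (exact absurd h (Fin.ne_of_lt (Fin.castSucc_lt_last _)))
      | (exact absurd h.symm (Fin.ne_of_lt (Fin.castSucc_lt_last _)))
      | (apply Fin.ext
         have := π.injective (Fin.castSucc_injective n h)
         have := congrArg Fin.val this
         simp only at this
         omega)
      | (apply Fin.ext; omega)

noncomputable def insPerm {n : ℕ} (π : Equiv.Perm (Fin n)) (p : Fin (n+1)) :
    Equiv.Perm (Fin (n+1)) :=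
  Equiv.ofBijective (insF π p) (Finite.injective_iff_bijective.1 (insF_inj π p))

lemma insPerm_apply {n : ℕ} (π : Equiv.Perm (Fin n)) (p : Fin (n+1)) (i : Fin (n+1)) :
    insPerm π p i = insF π p i := rfl

noncomputable def ins {n : ℕ} (σ : BSigned n) (p : Fin (n+1)) (ε : Bool) : BSigned (n+1) :=
  (insPerm σ.1 p,
   fun i => if h : (i : ℕ) < (p : ℕ) then σ.2 ⟨i, by have := p.isLt; omega⟩
     else if h2 : (i : ℕ) = (p : ℕ) then ε
     else σ.2 ⟨(i : ℕ) - 1, by have := i.isLt; omega⟩)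

lemma bword_ins_le {n : ℕ} (σ : BSigned n) (p : Fin (n+1)) (ε : Bool) {j : ℕ}
    (hj : j ≤ (p : ℕ)) : bword (ins σ p ε) j = bword σ j := by
  have hp := p.isLt
  rcases Nat.eq_zero_or_pos j with h0 | h1
  · subst h0; simp [bword]
  · have hcond1 : 1 ≤ j ∧ j ≤ n + 1 := ⟨h1, by omega⟩
    have hcond2 : 1 ≤ j ∧ j ≤ n := ⟨h1, by omega⟩
    rw [bword, bword, dif_pos hcond1, dif_pos hcond2]
    have hlt : j - 1 < (p : ℕ) := by omega
    have e1 : (ins σ p ε).1 ⟨j - 1, by omega⟩ = (σ.1 ⟨j - 1, by omega⟩).castSucc := by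
      show insF σ.1 p _ = _
      unfold insF
      rw [dif_pos hlt]
    have e2 : (ins σ p ε).2 ⟨j - 1, by omega⟩ = σ.2 ⟨j - 1, by omega⟩ := by
      show (if h : _ then _ else _) = _
      rw [dif_pos hlt]
    rw [e1, e2, Fin.coe_castSucc]

lemma bword_ins_mid {n : ℕ} (σ : BSigned n) (p : Fin (n+1)) (ε : Bool) :
    bword (ins σ p ε) ((p : ℕ) + 1) = (if ε then -1 else 1) * ((n : ℤ) + 1) := by
  have hp := p.isLt
  have hcond1 : 1 ≤ (p:ℕ) + 1 ∧ (p:ℕ) + 1 ≤ n + 1 := ⟨by omega, by omega⟩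
  rw [bword, dif_pos hcond1]
  have e1 : (ins σ p ε).1 ⟨(p:ℕ) + 1 - 1, by omega⟩ = Fin.last n := by
    show insF σ.1 p _ = _
    unfold insF
    rw [dif_neg (by simp), dif_pos (by simp)]
  have e2 : (ins σ p ε).2 ⟨(p:ℕ) + 1 - 1, by omega⟩ = ε := by
    show (if h : _ then _ else _) = _
    rw [dif_neg (by simp), dif_pos (by simp)]
  rw [e1, e2, Fin.val_last]

lemma bword_ins_gt {n : ℕ} (σ : BSigned n) (p : Fin (n+1)) (ε : Bool) {j : ℕ}
    (hj : (p : ℕ) + 2 ≤ j) : bword (ins σ p ε) j = bword σ (j - 1) := by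
  have hp := p.isLt
  by_cases hj2 : j ≤ n + 1
  · have hcond1 : 1 ≤ j ∧ j ≤ n + 1 := ⟨by omega, hj2⟩
    have hcond2 : 1 ≤ j - 1 ∧ j - 1 ≤ n := ⟨by omega, by omega⟩
    rw [bword, bword, dif_pos hcond1, dif_pos hcond2]
    have e1 : (ins σ p ε).1 ⟨j - 1, by omega⟩ = (σ.1 ⟨j - 1 - 1, by omega⟩).castSucc := by
      show insF σ.1 p _ = _
      unfold insF
      rw [dif_neg (by simp; omega), dif_neg (by simp; omega)]
    have e2 : (ins σ p ε).2 ⟨j - 1, by omega⟩ = σ.2 ⟨j - 1 - 1, by omega⟩ := by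
      show (if h : _ then _ else _) = _
      rw [dif_neg (by simp; omega), dif_neg (by simp; omega)]
    rw [e1, e2, Fin.coe_castSucc]
  · rw [bword, bword, dif_neg (by omega), dif_neg (by omega)]

lemma insPerm_symm_last {n : ℕ} (π : Equiv.Perm (Fin n)) (p : Fin (n+1)) :
    (insPerm π p).symm (Fin.last n) = p := by
  rw [Equiv.symm_apply_eq, insPerm_apply]
  unfold insF
  rw [dif_neg (lt_irrefl _), dif_pos rfl]

lemma ins_inj {n : ℕ} :
    Function.Injective (fun q : BSigned n × Fin (n+1) × Bool => ins q.1 q.2.1 q.2.2) := by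
  rintro ⟨σ, p, ε⟩ ⟨σ', p', ε'⟩ h
  simp only [Prod.mk.injEq] at h ⊢
  obtain ⟨h1, h2⟩ : (ins σ p ε).1 = (ins σ' p' ε').1 ∧ (ins σ p ε).2 = (ins σ' p' ε').2 :=
    ⟨congrArg Prod.fst h, congrArg Prod.snd h⟩
  have hpp : p = p' := by
    have h3 := congrArg (fun e => e.symm (Fin.last n)) h1
    rw [show (ins σ p ε).1 = insPerm σ.1 p from rfl,
      show (ins σ' p' ε').1 = insPerm σ'.1 p' from rfl,
      insPerm_symm_last, insPerm_symm_last] at h3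
    exact h3
  subst hpp
  have hperm : σ.1 = σ'.1 := by
    apply Equiv.ext
    intro i
    have hi := i.isLt
    by_cases hip : (i : ℕ) < (p : ℕ)
    · have h3 : insF σ.1 p (Fin.castSucc i) = insF σ'.1 p (Fin.castSucc i) :=
        DFunLike.congr_fun h1 (Fin.castSucc i)
      unfold insF at h3
      split_ifs at h3 with h4 h5
      · have h6 := Fin.castSucc_injective n h3
        simpa using h6
      · exfalso; rw [Fin.coe_castSucc] at h4; omega
      · exfalso; rw [Fin.coe_castSucc] at h4; omega
    · have h3 : insF σ.1 p i.succ = insF σ'.1 p i.succ :=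
        DFunLike.congr_fun h1 i.succ
      unfold insF at h3
      split_ifs at h3 with h4 h5
      · exfalso; rw [Fin.val_succ] at h4; omega
      · exfalso; rw [Fin.val_succ] at h5; omega
      · have h6 := Fin.castSucc_injective n h3
        simpa using h6
  have hsign : σ.2 = σ'.2 ∧ ε = ε' := by
    constructor
    · funext i
      have hi := i.isLt
      by_cases hip : (i : ℕ) < (p : ℕ)
      · have h3 := congrFun h2 (Fin.castSucc i)
        simp only [ins] at h3
        split_ifs at h3 with h4 h5
        · simpa using h3
        · exfalso; rw [Fin.coe_castSucc] at h4; omega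
        · exfalso; rw [Fin.coe_castSucc] at h4; omega
      · have h3 := congrFun h2 i.succ
        simp only [ins] at h3
        split_ifs at h3 with h4 h5
        · exfalso; rw [Fin.val_succ] at h4; omega
        · exfalso; rw [Fin.val_succ] at h5; omega
        · simpa using h3
    · have h3 := congrFun h2 p
      simp only [ins, lt_self_iff_false, dif_neg, not_false_iff, dif_pos] at h3
      exact h3
  exact ⟨Prod.ext hperm hsign.1, rfl, hsign.2⟩

lemma ins_bij {n : ℕ} :
    Function.Bijective (fun q : BSigned n × Fin (n+1) × Bool => ins q.1 q.2.1 q.2.2) := by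
  rw [Fintype.bijective_iff_injective_and_card]
  refine ⟨ins_inj, ?_⟩
  simp only [Fintype.card_prod, Fintype.card_perm, Fintype.card_fun, Fintype.card_fin,
    Fintype.card_bool, Nat.factorial_succ]
  ring

/-! word facts -/

lemma bword_abs_le {n : ℕ} (σ : BSigned n) (j : ℕ) : |bword σ j| ≤ (n : ℤ) := by
  rw [bword]
  split_ifs with h hb
  · have hπ := (σ.1 ⟨j - 1, by omega⟩).isLt
    rw [abs_le]; constructor <;> omega
  · have hπ := (σ.1 ⟨j - 1, by omega⟩).isLt
    rw [abs_le]; constructor <;> omega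
  · rw [abs_le]; constructor <;> omega

lemma bword_natAbs {n : ℕ} (σ : BSigned n) {j : ℕ} (h1 : 1 ≤ j) (h2 : j ≤ n) :
    (bword σ j).natAbs = (σ.1 ⟨j - 1, by omega⟩ : ℕ) + 1 := by
  rw [bword, dif_pos ⟨h1, h2⟩]
  have hcast : ((σ.1 ⟨j - 1, by omega⟩ : ℕ) : ℤ) + 1 = ((((σ.1 ⟨j - 1, by omega⟩ : ℕ) + 1 : ℕ)) : ℤ) := by
    push_cast; ring
  cases hs : σ.2 ⟨j - 1, by omega⟩
  · rw [if_neg (by simp [hs]), one_mul, hcast, Int.natAbs_natCast]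
  · rw [if_pos (by simp [hs]), neg_one_mul, Int.natAbs_neg, hcast, Int.natAbs_natCast]

lemma bword_ne {n : ℕ} (σ : BSigned n) {j : ℕ} (hj : j < n) :
    bword σ j ≠ bword σ (j + 1) := by
  rcases Nat.eq_zero_or_pos j with h0 | h1
  · subst h0
    rw [bword, bword, dif_neg (by omega), dif_pos ⟨le_refl 1, by omega⟩]
    rcases Bool.eq_false_or_eq_true (σ.2 ⟨0, by omega⟩) with hb | hb <;>
      simp [hb] <;> intro hc <;>
      [skip; skip] <;> omega
  · intro hc
    have h3 := congrArg Int.natAbs hc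
    rw [bword_natAbs σ h1 (by omega), bword_natAbs σ (by omega) (by omega)] at h3
    have h4 : σ.1 ⟨j - 1, by omega⟩ = σ.1 ⟨j + 1 - 1, by omega⟩ := Fin.ext (by omega)
    have h5 := σ.1.injective h4
    have h6 := congrArg Fin.val h5
    simp only at h6
    omega

/-! pair predicate -/

def Pb {n : ℕ} (σ : BSigned n) (j : ℕ) : Prop :=
  (Even j ∧ bword σ j < bword σ (j + 1)) ∨ (Odd j ∧ bword σ (j + 1) < bword σ j)

instance {n : ℕ} (σ : BSigned n) (j : ℕ) : Decidable (Pb σ j) := by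
  unfold Pb; infer_instance

lemma altdes_eq {n : ℕ} (σ : BSigned n) :
    altdesB σ = ((Finset.range n).filter (fun j => Pb σ j)).card := rfl

lemma bword_lt_ins_val {n : ℕ} (σ : BSigned n) (j : ℕ) : bword σ j < (n : ℤ) + 1 := by
  have := bword_abs_le σ j
  rw [abs_le] at this
  omega

lemma neg_ins_val_lt_bword {n : ℕ} (σ : BSigned n) (j : ℕ) : -((n : ℤ) + 1) < bword σ j := by
  have := bword_abs_le σ j
  rw [abs_le] at this
  omega

lemma Pb_flip {n : ℕ} (σ : BSigned n) {j : ℕ} (hj : j < n) :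
    ((Even (j+1) ∧ bword σ j < bword σ (j + 1)) ∨ (Odd (j+1) ∧ bword σ (j + 1) < bword σ j))
      ↔ ¬ Pb σ j := by
  have hne := bword_ne σ hj
  unfold Pb
  simp only [Nat.even_iff, Nat.odd_iff]
  generalize bword σ j = a at *
  generalize bword σ (j+1) = b at *
  omega

/-! count lemma for p < n -/

lemma altdes_ins_lt {n : ℕ} (σ : BSigned n) (p : Fin (n+1)) (ε : Bool) (hp : (p : ℕ) < n) :
    altdesB (ins σ p ε) =
      ((Finset.range (p : ℕ)).filter (fun j => Pb σ j)).card
      + ((Finset.Ico ((p : ℕ) + 1) n).filter (fun j => ¬ Pb σ j)).card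
      + (if ε then (if Odd (p : ℕ) then 2 else 0) else (if Even (p : ℕ) then 2 else 0)) := by
  set q : ℕ := (p : ℕ) with hq
  have hmid := bword_ins_mid σ p ε
  rw [altdes_eq, Finset.card_filter, Finset.card_filter, Finset.card_filter]
  rw [Finset.range_eq_Ico, ← Finset.sum_Ico_consecutive _ (Nat.zero_le q) (by omega : q ≤ n + 1)]
  rw [Finset.sum_eq_sum_Ico_succ_bot (by omega : q < n + 1)]
  rw [Finset.sum_eq_sum_Ico_succ_bot (by omega : q + 1 < n + 1)]
  -- part 1 : pairs below q
  have hpart1 : ∑ j ∈ Finset.Ico 0 q, (if Pb (ins σ p ε) j then 1 else 0)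
      = ∑ j ∈ Finset.Ico 0 q, (if Pb σ j then 1 else 0) := by
    refine Finset.sum_congr rfl fun j hj => ?_
    rw [Finset.mem_Ico] at hj
    have e1 : bword (ins σ p ε) j = bword σ j := bword_ins_le σ p ε (by omega)
    have e2 : bword (ins σ p ε) (j + 1) = bword σ (j + 1) := bword_ins_le σ p ε (by omega)
    simp only [Pb, e1, e2]
  -- the two new pairs
  have hble : bword (ins σ p ε) q = bword σ q := bword_ins_le σ p ε le_rfl
  have hbgt : bword (ins σ p ε) (q + 2) = bword σ (q + 1) := by
    have := bword_ins_gt σ p ε (j := q + 2) (by omega)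
    simpa using this
  have hpair : (if Pb (ins σ p ε) q then 1 else 0) + (if Pb (ins σ p ε) (q+1) then 1 else 0)
      = (if ε then (if Odd q then 2 else 0) else (if Even q then 2 else 0)) := by
    cases ε with
    | false =>
      have hv : bword (ins σ p false) (q + 1) = (n : ℤ) + 1 := by rw [hmid]; simp
      have h1 : Pb (ins σ p false) q ↔ Even q := by
        unfold Pb
        rw [hble, hv]
        have := bword_lt_ins_val σ q
        constructor
        · rintro (⟨he, _⟩ | ⟨_, hlt⟩)
          · exact he
          · omega
        · intro he; exact Or.inl ⟨he, this⟩
      have h2 : Pb (ins σ p false) (q + 1) ↔ Even q := by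
        unfold Pb
        rw [hv, show q + 1 + 1 = q + 2 from rfl, hbgt]
        have hb := bword_lt_ins_val σ (q + 1)
        constructor
        · rintro (⟨_, hlt⟩ | ⟨ho, _⟩)
          · exact absurd hlt (asymm hb)
          · exact Nat.not_odd_iff_even.mp (Nat.odd_add_one.mp ho)
        · intro he
          exact Or.inr ⟨Nat.odd_add_one.mpr (Nat.not_odd_iff_even.mpr he), hb⟩
      simp only [h1, h2]
      by_cases he : Even q <;> simp [he]
    | true =>
      have hv : bword (ins σ p true) (q + 1) = -((n : ℤ) + 1) := by rw [hmid]; simp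
      have h1 : Pb (ins σ p true) q ↔ Odd q := by
        unfold Pb
        rw [hble, hv]
        have := neg_ins_val_lt_bword σ q
        constructor
        · rintro (⟨_, hlt⟩ | ⟨ho, _⟩)
          · omega
          · exact ho
        · intro ho; exact Or.inr ⟨ho, this⟩
      have h2 : Pb (ins σ p true) (q + 1) ↔ Odd q := by
        unfold Pb
        rw [hv, show q + 1 + 1 = q + 2 from rfl, hbgt]
        have hb := neg_ins_val_lt_bword σ (q + 1)
        constructor
        · rintro (⟨he, _⟩ | ⟨_, hlt⟩)
          · exact Nat.not_even_iff_odd.mp (Nat.even_add_one.mp he)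
          · exact absurd hlt (asymm hb)
        · intro ho
          exact Or.inl ⟨Nat.even_add_one.mpr (Nat.not_even_iff_odd.mpr ho), hb⟩
      simp only [h1, h2]
      by_cases ho : Odd q <;> simp [ho]
  -- tail
  have htail : ∑ j ∈ Finset.Ico (q + 2) (n + 1), (if Pb (ins σ p ε) j then 1 else 0)
      = ∑ j ∈ Finset.Ico (q + 1) n, (if ¬ Pb σ j then 1 else 0) := by
    rw [Finset.sum_Ico_eq_sum_range, Finset.sum_Ico_eq_sum_range]
    rw [show n + 1 - (q + 2) = n - (q + 1) by omega]
    refine Finset.sum_congr rfl fun k hk => ?_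
    rw [Finset.mem_range] at hk
    have hjn : q + 1 + k < n := by omega
    have e1 : bword (ins σ p ε) (q + 2 + k) = bword σ (q + 1 + k) := by
      have := bword_ins_gt σ p ε (j := q + 2 + k) (by omega)
      rw [this]; congr 1; omega
    have e2 : bword (ins σ p ε) (q + 2 + k + 1) = bword σ (q + 1 + k + 1) := by
      have := bword_ins_gt σ p ε (j := q + 2 + k + 1) (by omega)
      rw [this]; congr 1; omega
    have hPiff : Pb (ins σ p ε) (q + 2 + k) ↔ ¬ Pb σ (q + 1 + k) := by
      have hflip := Pb_flip σ hjn
      unfold Pb at hflip ⊢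
      rw [e1, show q + 2 + k + 1 = q + 1 + k + 1 + 1 by omega, e2] at *
      rw [← hflip]
      constructor
      · rintro (⟨he, hlt⟩ | ⟨ho, hlt⟩)
        · exact Or.inl ⟨by rwa [show q + 2 + k = q + 1 + k + 1 by omega] at he, hlt⟩
        · exact Or.inr ⟨by rwa [show q + 2 + k = q + 1 + k + 1 by omega] at ho, hlt⟩
      · rintro (⟨he, hlt⟩ | ⟨ho, hlt⟩)
        · exact Or.inl ⟨by rwa [show q + 2 + k = q + 1 + k + 1 by omega], hlt⟩
        · exact Or.inr ⟨by rwa [show q + 2 + k = q + 1 + k + 1 by omega], hlt⟩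
    simp only [hPiff]
  rw [hpart1, htail]
  have : Finset.Ico 0 q = Finset.range q := by rw [Finset.range_eq_Ico]
  rw [this]
  omega

/-! count lemma for p = n -/

lemma altdes_ins_last {n : ℕ} (σ : BSigned n) (ε : Bool) :
    altdesB (ins σ (Fin.last n) ε) = altdesB σ
      + (if ε then (if Odd n then 1 else 0) else (if Even n then 1 else 0)) := by
  have hmid := bword_ins_mid σ (Fin.last n) ε
  rw [Fin.val_last] at hmid
  rw [altdes_eq, altdes_eq, Finset.card_filter, Finset.card_filter, Finset.sum_range_succ]
  have hpart1 : ∑ j ∈ Finset.range n, (if Pb (ins σ (Fin.last n) ε) j then 1 else 0)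
      = ∑ j ∈ Finset.range n, (if Pb σ j then 1 else 0) := by
    refine Finset.sum_congr rfl fun j hj => ?_
    rw [Finset.mem_range] at hj
    have e1 : bword (ins σ (Fin.last n) ε) j = bword σ j :=
      bword_ins_le σ (Fin.last n) ε (by rw [Fin.val_last]; omega)
    have e2 : bword (ins σ (Fin.last n) ε) (j + 1) = bword σ (j + 1) :=
      bword_ins_le σ (Fin.last n) ε (by rw [Fin.val_last]; omega)
    simp only [Pb, e1, e2]
  rw [hpart1]
  have hble : bword (ins σ (Fin.last n) ε) n = bword σ n :=
    bword_ins_le σ (Fin.last n) ε (by rw [Fin.val_last])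
  have hlast : (if Pb (ins σ (Fin.last n) ε) n then 1 else 0)
      = (if ε then (if Odd n then 1 else 0) else (if Even n then 1 else 0)) := by
    cases ε with
    | false =>
      have hv : bword (ins σ (Fin.last n) false) (n + 1) = (n : ℤ) + 1 := by rw [hmid]; simp
      have h1 : Pb (ins σ (Fin.last n) false) n ↔ Even n := by
        unfold Pb
        rw [hble, hv]
        have := bword_lt_ins_val σ n
        constructor
        · rintro (⟨he, _⟩ | ⟨_, hlt⟩)
          · exact he
          · omega
        · intro he; exact Or.inl ⟨he, this⟩
      simp [h1]
    | true =>
      have hv : bword (ins σ (Fin.last n) true) (n + 1) = -((n : ℤ) + 1) := by rw [hmid]; simp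
      have h1 : Pb (ins σ (Fin.last n) true) n ↔ Odd n := by
        unfold Pb
        rw [hble, hv]
        have := neg_ins_val_lt_bword σ n
        constructor
        · rintro (⟨_, hlt⟩ | ⟨ho, _⟩)
          · omega
          · exact ho
        · intro ho; exact Or.inr ⟨ho, this⟩
      simp [h1]
  omega

/-! the sign-flipping involution -/

def negAfter {n : ℕ} (p : ℕ) (σ : BSigned n) : BSigned n :=
  (σ.1, fun i => if p ≤ (i : ℕ) then !(σ.2 i) else σ.2 i)

lemma negAfter_invol {n : ℕ} (p : ℕ) (σ : BSigned n) : negAfter p (negAfter p σ) = σ := by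
  unfold negAfter
  refine Prod.ext rfl ?_
  funext i
  by_cases h : p ≤ (i : ℕ) <;> simp [h]

lemma bword_negAfter_le {n : ℕ} (p : ℕ) (σ : BSigned n) {j : ℕ} (hj : j ≤ p) :
    bword (negAfter p σ) j = bword σ j := by
  rcases Nat.eq_zero_or_pos j with h0 | h1
  · subst h0; simp [bword]
  · rw [bword, bword]
    by_cases h2 : 1 ≤ j ∧ j ≤ n
    · rw [dif_pos h2, dif_pos h2]
      have : (negAfter p σ).2 ⟨j - 1, by omega⟩ = σ.2 ⟨j - 1, by omega⟩ := by
        show (if p ≤ _ then _ else _) = _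
        rw [if_neg (by simp; omega)]
      rw [this]
      rfl
    · rw [dif_neg h2, dif_neg h2]

lemma bword_negAfter_gt {n : ℕ} (p : ℕ) (σ : BSigned n) {j : ℕ} (hj : p + 1 ≤ j) :
    bword (negAfter p σ) j = - bword σ j := by
  rw [bword, bword]
  by_cases h2 : 1 ≤ j ∧ j ≤ n
  · rw [dif_pos h2, dif_pos h2]
    have hsgn : (negAfter p σ).2 ⟨j - 1, by omega⟩ = !(σ.2 ⟨j - 1, by omega⟩) := by
      show (if p ≤ _ then _ else _) = _
      rw [if_pos (by simp; omega)]
    rw [hsgn]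
    have hval : (negAfter p σ).1 = σ.1 := rfl
    rw [hval]
    cases hs : σ.2 ⟨j - 1, by omega⟩ <;> simp <;> ring
  · rw [dif_neg h2, dif_neg h2]; ring

lemma Pb_negAfter_lt {n : ℕ} (p : ℕ) (σ : BSigned n) {j : ℕ} (hj : j + 1 ≤ p) :
    Pb (negAfter p σ) j ↔ Pb σ j := by
  unfold Pb
  rw [bword_negAfter_le p σ (by omega), bword_negAfter_le p σ (by omega : j + 1 ≤ p)]

lemma Pb_negAfter_gt {n : ℕ} (p : ℕ) (σ : BSigned n) {j : ℕ} (hj : p + 1 ≤ j) (hjn : j < n) :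
    Pb (negAfter p σ) j ↔ ¬ Pb σ j := by
  unfold Pb
  rw [bword_negAfter_gt p σ (by omega), bword_negAfter_gt p σ (by omega : p + 1 ≤ j + 1)]
  have hne := bword_ne σ hjn
  simp only [Nat.even_iff, Nat.odd_iff, neg_lt_neg_iff]
  generalize bword σ j = a at *
  generalize bword σ (j+1) = b at *
  omega

lemma key_invol {n : ℕ} (σ : BSigned n) {p : ℕ} (hp : p < n) :
    ((Finset.range p).filter (fun j => Pb (negAfter p σ) j)).card
      + ((Finset.Ico (p + 1) n).filter (fun j => ¬ Pb (negAfter p σ) j)).card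
      + (if Pb σ p then 1 else 0) = altdesB σ := by
  have e1 : ((Finset.range p).filter (fun j => Pb (negAfter p σ) j)).card
      = ((Finset.range p).filter (fun j => Pb σ j)).card := by
    apply Finset.card_bij (fun j _ => j) <;> intro j hj <;>
      simp only [Finset.mem_filter, Finset.mem_range] at *
    · exact ⟨hj.1, (Pb_negAfter_lt p σ (by omega)).mp hj.2⟩
    · intro k hk h; exact h
    · exact ⟨j, ⟨hj.1, (Pb_negAfter_lt p σ (by omega)).mpr hj.2⟩, rfl⟩
  have e2 : ((Finset.Ico (p + 1) n).filter (fun j => ¬ Pb (negAfter p σ) j)).card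
      = ((Finset.Ico (p + 1) n).filter (fun j => Pb σ j)).card := by
    apply Finset.card_bij (fun j _ => j) <;> intro j hj <;>
      simp only [Finset.mem_filter, Finset.mem_Ico] at *
    · refine ⟨hj.1, ?_⟩
      have := (Pb_negAfter_gt p σ (by omega) (by omega)).not.mp hj.2
      rwa [not_not] at this
    · intro k hk h; exact h
    · refine ⟨j, ⟨hj.1, ?_⟩, rfl⟩
      rw [Pb_negAfter_gt p σ (by omega) (by omega), not_not]
      exact hj.2
  rw [e1, e2, altdes_eq]
  have hsplit : (Finset.range n).filter (fun j => Pb σ j)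
      = ((Finset.range p).filter (fun j => Pb σ j))
        ∪ ((Finset.Ico p (p+1)).filter (fun j => Pb σ j))
        ∪ ((Finset.Ico (p + 1) n).filter (fun j => Pb σ j)) := by
    rw [← Finset.filter_union, ← Finset.filter_union]
    congr 1
    rw [Finset.range_eq_Ico, Finset.range_eq_Ico, Finset.Ico_union_Ico_eq_Ico (Nat.zero_le p) (by omega : p ≤ p + 1),
      Finset.Ico_union_Ico_eq_Ico (Nat.zero_le (p+1)) (by omega : p + 1 ≤ n)]
  have hd1 : Disjoint ((Finset.range p).filter (fun j => Pb σ j))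
      ((Finset.Ico p (p+1)).filter (fun j => Pb σ j)) :=
    Finset.disjoint_filter_filter (Finset.disjoint_left.mpr (fun a ha hb => by
      rw [Finset.mem_range] at ha; rw [Finset.mem_Ico] at hb; omega)) 
  have hd2 : Disjoint (((Finset.range p).filter (fun j => Pb σ j))
        ∪ ((Finset.Ico p (p+1)).filter (fun j => Pb σ j)))
      ((Finset.Ico (p + 1) n).filter (fun j => Pb σ j)) := by
    rw [Finset.disjoint_union_left]
    constructor
    · exact Finset.disjoint_filter_filter (Finset.disjoint_left.mpr (fun a ha hb => by
        rw [Finset.mem_range] at ha; rw [Finset.mem_Ico] at hb; omega))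
    · exact Finset.disjoint_filter_filter (Finset.disjoint_left.mpr (fun a ha hb => by
        rw [Finset.mem_Ico] at ha; rw [Finset.mem_Ico] at hb; omega))
  have hmidc : ((Finset.Ico p (p+1)).filter (fun j => Pb σ j)).card = (if Pb σ p then 1 else 0) := by
    have hset : Finset.Ico p (p+1) = {p} := by
      ext a; simp only [Finset.mem_Ico, Finset.mem_singleton]; omega
    rw [hset, Finset.filter_singleton]
    by_cases hP : Pb σ p <;> simp [hP]
  rw [hsplit, Finset.card_union_of_disjoint hd2, Finset.card_union_of_disjoint hd1, hmidc]
  omega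

noncomputable def Dpoly (n : ℕ) (x : ℝ) : ℝ :=
  ∑ σ : BSigned n, (altdesB σ : ℝ) * x ^ (altdesB σ - 1)

def mval {n : ℕ} (σ : BSigned n) (i : ℕ) : ℕ :=
  ((Finset.range i).filter (fun j => Pb σ j)).card
    + ((Finset.Ico (i+1) n).filter (fun j => ¬ Pb σ j)).card

lemma altdes_le {n : ℕ} (σ : BSigned n) : altdesB σ ≤ n := by
  rw [altdes_eq]
  exact le_trans (Finset.card_filter_le _ _) (by rw [Finset.card_range])

lemma per_sigma (n k : ℕ) (hk : k ≤ n) (x : ℝ) :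
    x^k + x^(k+1) + (1 + x^2) * ((k:ℝ) * x^(k-1) + ((n - k : ℕ):ℝ) * x^k)
      = (1 + (n:ℝ) + x + (n:ℝ) * x^2) * x^k + (1 - x) * (1 + x^2) * ((k:ℝ) * x^(k-1)) := by
  cases k with
  | zero => push_cast [Nat.sub_zero]; ring
  | succ m =>
    have hc : ((n - (m+1) : ℕ) : ℝ) = (n : ℝ) - (m+1 : ℝ) := by
      push_cast [Nat.cast_sub hk]; ring
    rw [hc, show m + 1 - 1 = m from rfl, pow_succ, pow_succ, pow_succ]
    push_cast
    ring

lemma comb (n : ℕ) (x : ℝ) :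
    Bpoly (n+1) x = (1 + (n:ℝ) + x + (n:ℝ) * x^2) * Bpoly n x
      + (1 - x) * (1 + x^2) * Dpoly n x := by
  have h1 : Bpoly (n+1) x = ∑ q : BSigned n × Fin (n+1) × Bool,
      x ^ altdesB (ins q.1 q.2.1 q.2.2) :=
    (Fintype.sum_bijective _ ins_bij _ (fun σ' => x ^ altdesB σ') (fun q => rfl)).symm
  rw [h1, Fintype.sum_prod_type]
  have hσ : ∀ σ : BSigned n, (∑ pε : Fin (n+1) × Bool, x ^ altdesB (ins σ pε.1 pε.2))
      = x ^ altdesB σ + x ^ (altdesB σ + 1)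
        + ∑ i : Fin n, (x ^ (mval σ i) + x ^ (mval σ i + 2)) := by
    intro σ
    rw [Fintype.sum_prod_type, Fin.sum_univ_castSucc]
    have hlast : (∑ ε : Bool, x ^ altdesB (ins σ (Fin.last n) ε))
        = x ^ altdesB σ + x ^ (altdesB σ + 1) := by
      have ht := altdes_ins_last σ true
      have hf := altdes_ins_last σ false
      simp only [if_true, Bool.false_eq_true, if_false] at ht hf
      rw [Fintype.sum_bool, ht, hf]
      rcases Nat.even_or_odd n with h | h
      · rw [if_neg (Nat.not_odd_iff_even.mpr h), if_pos h]; ring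
      · rw [if_pos h, if_neg (Nat.not_even_iff_odd.mpr h)]; ring
    have hcast : ∀ i : Fin n, (∑ ε : Bool, x ^ altdesB (ins σ (Fin.castSucc i) ε))
        = x ^ (mval σ i) + x ^ (mval σ i + 2) := by
      intro i
      have hip : ((Fin.castSucc i : Fin (n+1)) : ℕ) < n := by simpa using i.isLt
      have ht := altdes_ins_lt σ (Fin.castSucc i) true hip
      have hf := altdes_ins_lt σ (Fin.castSucc i) false hip
      simp only [if_true, Bool.false_eq_true, if_false] at ht hf
      have hmv : ((Finset.range ((Fin.castSucc i : Fin (n+1)) : ℕ)).filter (fun j => Pb σ j)).card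
          + ((Finset.Ico (((Fin.castSucc i : Fin (n+1)) : ℕ) + 1) n).filter (fun j => ¬ Pb σ j)).card
          = mval σ i := by
        rw [mval]; congr 2 <;> simp
      rw [Fintype.sum_bool, ht, hf]
      rcases Nat.even_or_odd ((Fin.castSucc i : Fin (n+1)) : ℕ) with h | h
      · rw [if_neg (Nat.not_odd_iff_even.mpr h), if_pos h, hmv]
        ring
      · rw [if_pos h, if_neg (Nat.not_even_iff_odd.mpr h), hmv]
        ring
    rw [hlast, Finset.sum_congr rfl (fun i _ => hcast i)]
    ring
  rw [Finset.sum_congr rfl (fun σ _ => hσ σ)]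
  -- split the sums
  rw [Finset.sum_add_distrib, Finset.sum_add_distrib]
  -- handle the double sum
  have hdouble : (∑ σ : BSigned n, ∑ i : Fin n, (x ^ (mval σ i) + x ^ (mval σ i + 2)))
      = (1 + x^2) * ∑ σ : BSigned n, ((altdesB σ : ℝ) * x ^ (altdesB σ - 1)
          + ((n - altdesB σ : ℕ) : ℝ) * x ^ (altdesB σ)) := by
    have hstep1 : ∀ σ : BSigned n, (∑ i : Fin n, (x ^ (mval σ i) + x ^ (mval σ i + 2)))
        = (1 + x^2) * ∑ i : Fin n, x ^ (mval σ i) := by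
      intro σ
      rw [Finset.mul_sum]
      refine Finset.sum_congr rfl fun i _ => ?_
      rw [pow_add]
      ring
    rw [Finset.sum_congr rfl (fun σ _ => hstep1 σ), ← Finset.mul_sum]
    congr 1
    rw [Finset.sum_comm]
    have hfix : ∀ i : Fin n, (∑ σ : BSigned n, x ^ (mval σ i))
        = ∑ σ : BSigned n, (if Pb σ (i : ℕ) then x ^ (altdesB σ - 1) else x ^ (altdesB σ)) := by
      intro i
      have hbij : Function.Bijective (negAfter (i : ℕ) : BSigned n → BSigned n) :=
        Function.Involutive.bijective (negAfter_invol (i : ℕ))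
      rw [← Fintype.sum_bijective _ hbij
        (fun σ => x ^ (mval (negAfter (i : ℕ) σ) (i : ℕ)))
        (fun σ => x ^ (mval σ (i : ℕ))) (fun σ => rfl)]
      refine Finset.sum_congr rfl fun σ _ => ?_
      have hk := key_invol σ (i.isLt)
      by_cases hP : Pb σ (i : ℕ)
      · rw [if_pos hP]
        rw [if_pos hP] at hk
        have : mval (negAfter (i : ℕ) σ) (i : ℕ) = altdesB σ - 1 := by
          rw [mval]; omega
        rw [this]
      · rw [if_neg hP]
        rw [if_neg hP] at hk
        have : mval (negAfter (i : ℕ) σ) (i : ℕ) = altdesB σ := by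
          rw [mval]; omega
        rw [this]
    rw [Finset.sum_congr rfl (fun i _ => hfix i), Finset.sum_comm]
    refine Finset.sum_congr rfl fun σ _ => ?_
    rw [Fin.sum_univ_eq_sum_range (fun j => if Pb σ j then x ^ (altdesB σ - 1) else x ^ (altdesB σ)) n]
    rw [Finset.sum_ite, Finset.sum_const, Finset.sum_const]
    have hcard1 : ((Finset.range n).filter (fun j => Pb σ j)).card = altdesB σ := (altdes_eq σ).symm
    have hcard2 : ((Finset.range n).filter (fun j => ¬ Pb σ j)).card = n - altdesB σ := by
      have := Finset.card_filter_add_card_filter_not (s := Finset.range n)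
        (p := fun j => Pb σ j)
      rw [Finset.card_range] at this
      rw [altdes_eq] at *
      omega
    rw [hcard1, hcard2, nsmul_eq_mul, nsmul_eq_mul]
  rw [hdouble]
  rw [Bpoly, Dpoly, Finset.mul_sum, Finset.mul_sum, Finset.mul_sum, ← Finset.sum_add_distrib,
    ← Finset.sum_add_distrib, ← Finset.sum_add_distrib]
  refine Finset.sum_congr rfl fun σ _ => ?_
  have := per_sigma n (altdesB σ) (altdes_le σ) x
  calc x ^ altdesB σ + x ^ (altdesB σ + 1)
        + (1 + x^2) * ((altdesB σ : ℝ) * x ^ (altdesB σ - 1)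
          + ((n - altdesB σ : ℕ) : ℝ) * x ^ (altdesB σ)) = _ := this

lemma main_thm : ∀ (n : ℕ) (x : ℝ), Bpoly n x = G n x := by
  intro n
  induction n with
  | zero =>
    intro x
    have h0 : ∀ σ : BSigned 0, altdesB σ = 0 := fun σ => by simp [altdesB]
    have hL : Bpoly 0 x = (Fintype.card (BSigned 0) : ℝ) := by
      rw [Bpoly]
      rw [Finset.sum_congr rfl (fun σ _ => by rw [h0 σ, pow_zero])]
      rw [Finset.sum_const, nsmul_eq_mul, mul_one]
      rfl
    have hcard : Fintype.card (BSigned 0) = 1 := by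
      simp [Fintype.card_prod, Fintype.card_perm, Fintype.card_fun]
    rw [hL, hcard, G]
    simp [xi]
  | succ n ih =>
    intro x
    have hD : Dpoly n x = G' n x := by
      have hB : HasDerivAt (fun y => Bpoly n y) (Dpoly n x) x := by
        have heq : (fun y => Bpoly n y) = fun y => ∑ σ : BSigned n, y ^ altdesB σ := by
          funext y; rw [Bpoly]
        rw [heq, Dpoly]
        exact HasDerivAt.fun_sum (fun σ _ => hasDerivAt_pow _ x)
      have hG : HasDerivAt (fun y => Bpoly n y) (G' n x) x := by
        have heq : (fun y => Bpoly n y) = fun y => G n y := funext ih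
        rw [heq]
        exact hasDerivAt_G n x
      exact hB.unique hG
    rw [comb n x, ih x, hD, alg n x]

/-- the alternating gamma expansion
`B̂_n(x) = Σ_{i=0}^{⌊n/2⌋} ξ_{n,i} (-4x)^i (1+x)^{n-2i}`. -/
theorem stmt11 (n : ℕ) (x : ℝ) :
    Bpoly n x =
      ∑ i ∈ Finset.range (n / 2 + 1),
        (xi n i : ℝ) * (-4 * x) ^ i * (1 + x) ^ (n - 2 * i) := by
  have h := main_thm n x
  unfold G at h
  exact h
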